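/- Let G = ⟨Φ⟩ be an automata group with alphabet A. Then for every g ∈ G, the order of g (as an element of ℕ ∪ {∞}) is the least common multiple, taken over all finite directed paths in the symmetric conjugacy class graph starting at the vertex C(g), of the products of the integer labels along the path; in particular g has infinite order exactly when these products are unbounded. -/

import Mathlib

/-!
Common framework: finite state (Mealy) transducers and the automata groups
they generate, acting on infinite sequences.
-/

namespace AutomataPaper

variable {A S : Type*}

/-- The state reached after processing a finite input word, where
`f a s = (s', a')` means: in state `s`, on input letter `a`, the transducer
moves to state `s'` and outputs the letter `a'`. -/
def run (f : A → S → S × A) : S → List A → S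
  | s, [] => s
  | s, a :: w => run f (f a s).1 w

theorem run_append (f : A → S → S × A) (s : S) (u v : List A) :
    run f s (u ++ v) = run f (run f s u) v := by
  induction u generalizing s with
  | nil => rfl
  | cons a u ih => simpa [run] using ih _

/-- The action of the state `s` on infinite sequences over the alphabet. -/
def seqAct (f : A → S → S × A) (s : S) (w : ℕ → A) : ℕ → A := fun n =>
  (f (w n) (run f s (List.ofFn fun i : Fin n => w i))).2

/-- A valid finite-state transducer: for every state, the output-letter map
is a bijection of the alphabet. -/
def IsFST (f : A → S → S × A) : Prop :=
  ∀ s : S, Function.Bijective fun a => (f a s).2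

theorem seqAct_bijective (f : A → S → S × A) (hf : IsFST f) (s : S) :
    Function.Bijective (seqAct f s) := by
  classical
  constructor
  · intro w w' h
    funext n
    induction n using Nat.strong_induction_on with
    | _ n ih =>
      have hfun : (fun i : Fin n => w i) = fun i : Fin n => w' i :=
        funext fun i => ih i i.isLt
      have hn := congrFun h n
      simp only [seqAct, hfun] at hn
      have := (hf (run f s (List.ofFn fun i : Fin n => w' i))).injective
      exact this hn
  · intro v
    let e : S → A ≃ A := fun q => Equiv.ofBijective _ (hf q)
    let p : ℕ → S := fun n => Nat.rec s (fun m q => (f ((e q).symm (v m)) q).1) n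
    let w : ℕ → A := fun n => (e (p n)).symm (v n)
    have hrun : ∀ n : ℕ, run f s (List.ofFn fun i : Fin n => w i) = p n := by
      intro n
      induction n with
      | zero => rfl
      | succ m ih =>
        have hsplit : (List.ofFn fun i : Fin (m + 1) => w i)
            = (List.ofFn fun i : Fin m => w i) ++ [w m] := by
          rw [List.ofFn_succ']
          simp
        rw [hsplit, run_append, ih]
        rfl
    refine ⟨w, ?_⟩
    funext n
    show (f (w n) (run f s (List.ofFn fun i : Fin n => w i))).2 = v n
    rw [hrun]
    exact (e (p n)).apply_symm_apply (v n)

/-- The permutation of the set of infinite sequences induced by a state. -/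
noncomputable def statePerm (f : A → S → S × A) (hf : IsFST f) (s : S) :
    Equiv.Perm (ℕ → A) :=
  Equiv.ofBijective (seqAct f s) (seqAct_bijective f hf s)

/-- The automata group generated by a finite state transducer: the subgroup of
the permutation group of `A^∞` generated by the actions of the states. -/
noncomputable def autGroup (f : A → S → S × A) (hf : IsFST f) :
    Subgroup (Equiv.Perm (ℕ → A)) :=
  Subgroup.closure (Set.range (statePerm f hf))

/-- Prepending a letter to an infinite sequence. -/
def scons (a : A) (v : ℕ → A) : ℕ → A := fun n =>
  match n with
  | 0 => a
  | n + 1 => v n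

/-- Prepending a finite word to an infinite sequence. -/
def lappend (u : List A) (v : ℕ → A) : ℕ → A := fun n =>
  if h : n < u.length then u.get ⟨n, h⟩ else v (n - u.length)

/-- `IsStateSeq g h u` says that `h` is the state (section) `g@u` of `g` at the
finite word `u`: `g` maps sequences starting with `u` to sequences starting with
a fixed word `u'` of the same length, acting as `h` on the tail. -/
def IsStateSeq (g h : Equiv.Perm (ℕ → A)) (u : List A) : Prop :=
  ∃ u' : List A, u'.length = u.length ∧ ∀ v : ℕ → A, g (lappend u v) = lappend u' (h v)

end AutomataPaper

namespace AutomataPaper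

variable {A : Type*}

/-- The induced action of an element of an automata group on the first letter
of a sequence (for elements of an automata group, the first output letter
depends only on the first input letter, so evaluating on the constant ray
computes it). -/
def firstLetter (g : Equiv.Perm (ℕ → A)) : A → A := fun a => g (fun _ => a) 0

/-- `PathProd G g m` holds iff there is a finite directed path in the symmetric
conjugacy class graph starting at the vertex `C(g)` along which the labels
multiply to `m`.  Edges out of `C(g)` are computed from any representative
`g' ∈ C(g) = {x⁻¹ g^{±1} x | x ∈ G}`: for each `⟨g'⟩`-orbit on the alphabet,
with representative `a` and size `n` (the minimal period of `a` under the
first-letter action of `g'`), there is an edge labelled `n` to the class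
`C(h)` of the state `h = (g'^n)@a`, characterised by
`(g'^n)(a·v) = a·(h v)` for all tails `v`. -/
inductive PathProd (G : Subgroup (Equiv.Perm (ℕ → A))) :
    Equiv.Perm (ℕ → A) → ℕ → Prop
  | nil (g : Equiv.Perm (ℕ → A)) : PathProd G g 1
  | step (g g' h : Equiv.Perm (ℕ → A)) (n m : ℕ)
      (hrep : ∃ x ∈ G, g' = x⁻¹ * g * x ∨ g' = x⁻¹ * g⁻¹ * x)
      (hedge : ∃ a : A, n = Function.minimalPeriod (firstLetter g') a ∧
        ∀ v : ℕ → A, (g' ^ n) (scons a v) = scons a (h v))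
      (htail : PathProd G h m) : PathProd G g (n * m)


section OrderLemmaAux

variable {A : Type*}

lemma scons_head_tail (w : ℕ → A) : scons (w 0) (fun n => w (n + 1)) = w := by
  funext n; cases n <;> rfl

lemma scons_tail_inj {a : A} {v v' : ℕ → A} (h : scons a v = scons a v') : v = v' :=
  funext fun n => congrFun h (n + 1)

/-- `g` acts on first letters via the permutation `σ`, with all first-level
states belonging to `G`. -/
def Good (G : Subgroup (Equiv.Perm (ℕ → A))) (g : Equiv.Perm (ℕ → A)) : Prop :=
  ∃ σ : Equiv.Perm A, ∀ a : A, ∃ h, h ∈ G ∧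
    ∀ v : ℕ → A, g (scons a v) = scons (σ a) (h v)

lemma good_first {G : Subgroup (Equiv.Perm (ℕ → A))} {g : Equiv.Perm (ℕ → A)}
    {σ : Equiv.Perm A}
    (hσ : ∀ a : A, ∃ h, h ∈ G ∧ ∀ v : ℕ → A, g (scons a v) = scons (σ a) (h v))
    (w : ℕ → A) : g w 0 = σ (w 0) := by
  obtain ⟨h, -, hh⟩ := hσ (w 0)
  have h1 := hh (fun n => w (n + 1))
  rw [scons_head_tail w] at h1
  rw [h1]
  rfl

lemma firstLetter_eq {G : Subgroup (Equiv.Perm (ℕ → A))} {g : Equiv.Perm (ℕ → A)}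
    {σ : Equiv.Perm A}
    (hσ : ∀ a : A, ∃ h, h ∈ G ∧ ∀ v : ℕ → A, g (scons a v) = scons (σ a) (h v)) :
    firstLetter g = ⇑σ :=
  funext fun a => good_first hσ (fun _ => a)

lemma good_pow {G : Subgroup (Equiv.Perm (ℕ → A))} {g : Equiv.Perm (ℕ → A)}
    {σ : Equiv.Perm A}
    (hσ : ∀ a : A, ∃ h, h ∈ G ∧ ∀ v : ℕ → A, g (scons a v) = scons (σ a) (h v)) :
    ∀ (t : ℕ) (a : A), ∃ h, h ∈ G ∧
      ∀ v : ℕ → A, (g ^ t) (scons a v) = scons ((σ ^ t) a) (h v) := by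
  intro t
  induction t with
  | zero => exact fun a => ⟨1, G.one_mem, fun v => by simp⟩
  | succ t ih =>
    intro a
    obtain ⟨h, hh, he⟩ := ih a
    obtain ⟨h', hh', he'⟩ := hσ ((σ ^ t) a)
    refine ⟨h' * h, G.mul_mem hh' hh, fun v => ?_⟩
    rw [pow_succ', Equiv.Perm.mul_apply, he, he', pow_succ',
      Equiv.Perm.mul_apply, Equiv.Perm.mul_apply]

lemma pow_scons {g h : Equiv.Perm (ℕ → A)} {a : A}
    (he : ∀ v : ℕ → A, g (scons a v) = scons a (h v)) :
    ∀ (t : ℕ) (v : ℕ → A), (g ^ t) (scons a v) = scons a ((h ^ t) v) := by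
  intro t
  induction t with
  | zero => intro v; simp
  | succ t ih =>
    intro v
    rw [pow_succ', Equiv.Perm.mul_apply, ih, he, pow_succ', Equiv.Perm.mul_apply]

lemma perm_pow_minimalPeriod (σ : Equiv.Perm A) (a : A) :
    (σ ^ Function.minimalPeriod (⇑σ) a) a = a := by
  have := Function.iterate_minimalPeriod (f := ⇑σ) (x := a)
  rwa [← Equiv.Perm.coe_pow] at this

lemma perm_minPeriod_pos [Finite A] (σ : Equiv.Perm A) (a : A) :
    0 < Function.minimalPeriod (⇑σ) a := by
  refine Function.IsPeriodicPt.minimalPeriod_pos (orderOf_pos σ) ?_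
  show (⇑σ)^[orderOf σ] a = a
  rw [← Equiv.Perm.coe_pow, pow_orderOf_eq_one]
  rfl

lemma state_mem {G : Subgroup (Equiv.Perm (ℕ → A))} {g' : Equiv.Perm (ℕ → A)}
    {σ : Equiv.Perm A}
    (hσ : ∀ a : A, ∃ h, h ∈ G ∧ ∀ v : ℕ → A, g' (scons a v) = scons (σ a) (h v))
    {n : ℕ} {a : A} (hfix : (σ ^ n) a = a) {h : Equiv.Perm (ℕ → A)}
    (he : ∀ v : ℕ → A, (g' ^ n) (scons a v) = scons a (h v)) : h ∈ G := by
  obtain ⟨h₀, h₀G, h₀e⟩ := good_pow hσ n a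
  have heq : h = h₀ := by
    refine Equiv.ext fun v => ?_
    refine scons_tail_inj (a := a) ?_
    rw [← he v, h₀e v, hfix]
  rwa [heq]

lemma statePerm_mem {A S : Type*} (f : A → S → S × A) (hb : IsFST f) (s : S) :
    statePerm f hb s ∈ autGroup f hb :=
  Subgroup.subset_closure ⟨s, rfl⟩

lemma autGroup_good {A S : Type*} (f : A → S → S × A) (hb : IsFST f) :
    ∀ g ∈ autGroup f hb, Good (autGroup f hb) g := by
  intro g hg
  refine Subgroup.closure_induction
    (p := fun x _ => Good (autGroup f hb) x) ?_ ?_ ?_ ?_ hg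
  · rintro x ⟨s, rfl⟩
    refine ⟨Equiv.ofBijective _ (hb s), fun a =>
      ⟨statePerm f hb (f a s).1, statePerm_mem f hb _, fun v => ?_⟩⟩
    funext n
    cases n with
    | zero =>
      show (f (scons a v 0) (run f s (List.ofFn fun i : Fin 0 => scons a v i))).2 = _
      rw [List.ofFn_zero]
      rfl
    | succ n =>
      show (f (scons a v (n + 1))
          (run f s (List.ofFn fun i : Fin (n + 1) => scons a v i))).2
        = (f (v n) (run f (f a s).1 (List.ofFn fun i : Fin n => v i))).2
      have hl : (List.ofFn fun i : Fin (n + 1) => scons a v i)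
          = a :: List.ofFn fun i : Fin n => v i := by
        rw [List.ofFn_succ]
        rfl
      rw [hl]
      rfl
  · exact ⟨1, fun a => ⟨1, Subgroup.one_mem _, fun v => rfl⟩⟩
  · rintro x y hx hy ⟨σx, pxx⟩ ⟨σy, pyy⟩
    refine ⟨σx * σy, fun a => ?_⟩
    obtain ⟨h2, h2G, h2e⟩ := pyy a
    obtain ⟨h1, h1G, h1e⟩ := pxx (σy a)
    refine ⟨h1 * h2, Subgroup.mul_mem _ h1G h2G, fun v => ?_⟩
    rw [Equiv.Perm.mul_apply, h2e, h1e]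
    rfl
  · rintro x hx ⟨σ, pxx⟩
    refine ⟨σ⁻¹, fun a => ?_⟩
    obtain ⟨h, hG, he⟩ := pxx (σ⁻¹ a)
    refine ⟨h⁻¹, Subgroup.inv_mem _ hG, fun v => ?_⟩
    have h1 := he (h⁻¹ v)
    have hai : ∀ {α : Type _} (e : Equiv.Perm α) (y : α), e (e⁻¹ y) = y :=
      fun e y => e.apply_symm_apply y
    have hia : ∀ {α : Type _} (e : Equiv.Perm α) (y : α), e⁻¹ (e y) = y :=
      fun e y => e.symm_apply_apply y
    rw [hai, hai] at h1
    rw [← h1, hia]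

lemma pathProd_g'_mem {G : Subgroup (Equiv.Perm (ℕ → A))}
    {g g' x : Equiv.Perm (ℕ → A)} (hg : g ∈ G) (hx : x ∈ G)
    (hx' : g' = x⁻¹ * g * x ∨ g' = x⁻¹ * g⁻¹ * x) : g' ∈ G := by
  rcases hx' with rfl | rfl
  · exact G.mul_mem (G.mul_mem (G.inv_mem hx) hg) hx
  · exact G.mul_mem (G.mul_mem (G.inv_mem hx) (G.inv_mem hg)) hx

lemma pathProd_pos [Finite A] {G : Subgroup (Equiv.Perm (ℕ → A))}
    (hGood : ∀ g ∈ G, Good G g) :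
    ∀ {g : Equiv.Perm (ℕ → A)} {m : ℕ}, PathProd G g m → g ∈ G → 0 < m := by
  intro g m hp
  induction hp with
  | nil g => exact fun _ => one_pos
  | step g g' hh n m hrep hedge htail ih =>
    intro hg
    obtain ⟨x, hx, hx'⟩ := hrep
    have hg' : g' ∈ G := pathProd_g'_mem hg hx hx'
    obtain ⟨σ, hσ⟩ := hGood g' hg'
    obtain ⟨a, hn, he⟩ := hedge
    have hfl : firstLetter g' = ⇑σ := firstLetter_eq hσ
    have hn' : n = Function.minimalPeriod (⇑σ) a := by rw [hn, hfl]
    have hnpos : 0 < n := hn' ▸ perm_minPeriod_pos σ a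
    have hfix : (σ ^ n) a = a := by rw [hn']; exact perm_pow_minimalPeriod σ a
    exact Nat.mul_pos hnpos (ih (state_mem hσ hfix he))

lemma pathProd_dvd_orderOf [Finite A] {G : Subgroup (Equiv.Perm (ℕ → A))}
    (hGood : ∀ g ∈ G, Good G g) :
    ∀ {g : Equiv.Perm (ℕ → A)} {m : ℕ}, PathProd G g m → g ∈ G → m ∣ orderOf g := by
  intro g m hp
  induction hp with
  | nil g => exact fun _ => one_dvd _
  | step g g' hh n m hrep hedge htail ih =>
    intro hg
    obtain ⟨x, hx, hx'⟩ := hrep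
    have hg' : g' ∈ G := pathProd_g'_mem hg hx hx'
    have horder : orderOf g' = orderOf g := by
      rcases hx' with rfl | rfl
      · have hsc : SemiconjBy x⁻¹ g (x⁻¹ * g * x) := by
          show x⁻¹ * g = (x⁻¹ * g * x) * x⁻¹; group
        exact (SemiconjBy.orderOf_eq _ hsc).symm
      · have hsc : SemiconjBy x⁻¹ g⁻¹ (x⁻¹ * g⁻¹ * x) := by
          show x⁻¹ * g⁻¹ = (x⁻¹ * g⁻¹ * x) * x⁻¹; group
        rw [← (SemiconjBy.orderOf_eq _ hsc), orderOf_inv]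
    rcases Nat.eq_zero_or_pos (orderOf g) with h0 | hNpos
    · rw [h0]; exact dvd_zero _
    obtain ⟨σ, hσ⟩ := hGood g' hg'
    obtain ⟨a, hn, he⟩ := hedge
    have hfl : firstLetter g' = ⇑σ := firstLetter_eq hσ
    have hn' : n = Function.minimalPeriod (⇑σ) a := by rw [hn, hfl]
    have hnpos : 0 < n := hn' ▸ perm_minPeriod_pos σ a
    have hfix : (σ ^ n) a = a := by rw [hn']; exact perm_pow_minimalPeriod σ a
    have hmem : hh ∈ G := state_mem hσ hfix he
    have hgN : g' ^ orderOf g = 1 := by rw [← horder]; exact pow_orderOf_eq_one g'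
    have hσN : (σ ^ orderOf g) a = a := by
      obtain ⟨h₀, -, h₀e⟩ := good_pow hσ (orderOf g) a
      have h1 := h₀e (fun _ => a)
      rw [hgN] at h1
      exact (congrFun h1 0).symm
    have hdvd : n ∣ orderOf g := by
      rw [hn']
      refine Function.IsPeriodicPt.minimalPeriod_dvd ?_
      show (⇑σ)^[orderOf g] a = a
      rw [← Equiv.Perm.coe_pow]
      exact hσN
    obtain ⟨t, hNt⟩ := hdvd
    have hht : hh ^ t = 1 := by
      refine Equiv.ext fun v => ?_
      have h1 : (g' ^ orderOf g) (scons a v) = scons a v := by rw [hgN]; rfl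
      have h2 := pow_scons he t v
      rw [← pow_mul, ← hNt] at h2
      have h3 : scons a ((hh ^ t) v) = scons a v := by rw [← h2, h1]
      exact scons_tail_inj h3
    have hmt : m ∣ t := dvd_trans (ih hmem) (orderOf_dvd_of_pow_eq_one hht)
    have hfin : n * m ∣ n * t := mul_dvd_mul_left n hmt
    rwa [← hNt] at hfin

lemma fix_lemma [Finite A] {G : Subgroup (Equiv.Perm (ℕ → A))}
    (hGood : ∀ g ∈ G, Good G g) (g : Equiv.Perm (ℕ → A))
    (d : ℕ) (hd : ∀ m, PathProd G g m → m ∣ d) :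
    ∀ (k : ℕ) (g' : Equiv.Perm (ℕ → A)), g' ∈ G → ∀ m : ℕ, 0 < m →
      (∀ j, PathProd G g' j → PathProd G g (m * j)) →
      ∀ (w : ℕ → A) (i : ℕ), i < k → (g' ^ (d / m)) w i = w i := by
  intro k
  induction k with
  | zero => intro g' _ m _ _ w i hi; exact absurd hi (Nat.not_lt_zero i)
  | succ k ih =>
    intro g' hg' m hm hpath w i hik
    obtain ⟨a, v, rfl⟩ : ∃ a v, w = scons a v :=
      ⟨w 0, fun n => w (n + 1), (scons_head_tail w).symm⟩
    obtain ⟨σ, hσ⟩ := hGood g' hg'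
    have hfl : firstLetter g' = ⇑σ := firstLetter_eq hσ
    set n := Function.minimalPeriod (⇑σ) a with hnd
    have hnpos : 0 < n := perm_minPeriod_pos σ a
    have hfix : (σ ^ n) a = a := perm_pow_minimalPeriod σ a
    obtain ⟨h, hhG, he⟩ := good_pow hσ n a
    have he' : ∀ u, (g' ^ n) (scons a u) = scons a (h u) := by
      intro u; rw [he u, hfix]
    have hstep : ∀ j, PathProd G h j → PathProd G g' (n * j) := fun j hj =>
      PathProd.step g' g' h n j ⟨1, G.one_mem, Or.inl (by group)⟩
        ⟨a, by rw [hfl], he'⟩ hj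
    have hpath' : ∀ j, PathProd G h j → PathProd G g (m * n * j) := fun j hj => by
      rw [mul_assoc]; exact hpath _ (hstep j hj)
    have hmn : m * n ∣ d := by
      have := hd _ (hpath' 1 (PathProd.nil h))
      simpa using this
    obtain ⟨t, ht⟩ := hmn
    have hdm : d / m = n * t := by
      rw [ht, mul_assoc, Nat.mul_div_cancel_left _ hm]
    have hdmn : d / (m * n) = t := by
      rw [ht, Nat.mul_div_cancel_left _ (Nat.mul_pos hm hnpos)]
    have h1 : (g' ^ (d / m)) (scons a v) = scons a ((h ^ t) v) := by
      rw [hdm, pow_mul]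
      exact pow_scons he' t v
    rw [h1]
    match i, hik with
    | 0, _ => rfl
    | (i + 1), hik =>
      show (h ^ t) v i = v i
      have h2 := ih h hhG (m * n) (Nat.mul_pos hm hnpos) hpath' v i (by omega)
      rwa [hdmn] at h2

end OrderLemmaAux

/-- **The order lemma.**  Let `G = ⟨Φ⟩` be an automata group over a finite
alphabet.  For every `g ∈ G`, the order of `g` — as an element of `ℕ ∪ {∞}`,
encoded by `orderOf` with the convention `orderOf g = 0` for infinite order —
is the least common multiple, over all finite directed paths in the symmetric
conjugacy class graph starting at `C(g)`, of the products of labels along the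
path: it is a common multiple of all such products and divides every common
multiple.  In particular `g` has infinite order exactly when these products
are unbounded. -/
theorem order_eq_lcm_of_path_products {A S : Type*} [Fintype A] [Fintype S]
    (f : A → S → S × A) (hb : IsFST f)
    (g : Equiv.Perm (ℕ → A)) (hg : g ∈ autGroup f hb) :
    (∀ m : ℕ, PathProd (autGroup f hb) g m → m ∣ orderOf g) ∧
    (∀ d : ℕ, (∀ m : ℕ, PathProd (autGroup f hb) g m → m ∣ d) → orderOf g ∣ d) ∧
    (orderOf g = 0 ↔ ¬ BddAbove {m : ℕ | PathProd (autGroup f hb) g m})  := by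
  classical
  have hGood := autGroup_good f hb
  have part1 : ∀ m : ℕ, PathProd (autGroup f hb) g m → m ∣ orderOf g :=
    fun m hm => pathProd_dvd_orderOf hGood hm hg
  have part2 : ∀ d : ℕ, (∀ m : ℕ, PathProd (autGroup f hb) g m → m ∣ d) →
      orderOf g ∣ d := by
    intro d hd
    apply orderOf_dvd_of_pow_eq_one
    refine Equiv.ext fun w => funext fun i => ?_
    have := fix_lemma hGood g d hd (i + 1) g hg 1 one_pos
      (fun j hj => by rwa [one_mul]) w i (Nat.lt_succ_self i)
    rwa [Nat.div_one] at this
  refine ⟨part1, part2, ?_, ?_⟩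
  · intro h0 hbdd
    obtain ⟨B, hB⟩ := hbdd
    have hdvd : orderOf g ∣ Nat.factorial B := by
      refine part2 _ fun m hm => ?_
      exact Nat.dvd_factorial (pathProd_pos hGood hm hg) (hB hm)
    rw [h0] at hdvd
    exact absurd (Nat.eq_zero_of_zero_dvd hdvd).symm (Nat.factorial_pos B).ne
  · intro hnb
    by_contra h0
    refine hnb ⟨orderOf g, fun m hm => ?_⟩
    exact Nat.le_of_dvd (Nat.pos_of_ne_zero h0) (part1 m hm)


end AutomataPaper
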